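/- Let g be a Lie algebra, ρ: g → gl(V) a representation on a vector space V, and T: V → g an O-operator of weight 0, i.e. [Tu,Tv] = T(ρ(Tu)v − ρ(Tv)u) for all u,v ∈ V. Then (V, ▷) with u▷v := ρ(Tu)v is a pre-Lie algebra, i.e. u▷(v▷w) − (u▷v)▷w = v▷(u▷w) − (v▷u)▷w for all u,v,w ∈ V. -/
import Mathlib

/-- An O-operator of weight 0 induces a pre-Lie algebra structure on V. -/
theorem oOperator_weightZero_inducesPreLie {K : Type*} [Field K] [CharZero K]
    {g : Type*} [LieRing g] [LieAlgebra K g]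
    {V : Type*} [AddCommGroup V] [Module K V]
    (ρ : g →ₗ[K] V →ₗ[K] V)
    (hhom : ∀ (x y : g) (v : V), ρ ⁅x, y⁆ v = ρ x (ρ y v) - ρ y (ρ x v))
    (T : V →ₗ[K] g)
    (hT : ∀ u v : V, ⁅T u, T v⁆ = T (ρ (T u) v - ρ (T v) u)) :
    ∀ u v w : V,
      ρ (T u) (ρ (T v) w) - ρ (T (ρ (T u) v)) w =
        ρ (T v) (ρ (T u) w) - ρ (T (ρ (T v) u)) w := by
  intro u v w
  have h := hhom (T u) (T v) w
  rw [hT u v] at h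
  simp only [map_sub, LinearMap.sub_apply] at h
  linear_combination (norm := abel) -h
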